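/- arXiv:2107.05435 — 2 statements merged into one kernel-verified Lean document; each statement's English description precedes it below -/
import Mathlib

section
/- Sortedness of pairs of t-spread monomials starting with variable x_1 is invariant under deleting x_1 and shifting indices down by t: for t-spread monomials u_1 = x_1 x_{i_2}···x_{i_d} and u_2 = x_1 x_{j_2}···x_{j_d} of degree d, the pair (u_1,u_2) is sorted if and only if the pair (x_{i_2−t}···x_{i_d−t}, x_{j_2−t}···x_{j_d−t}) is sorted. -/
/-- Split a list into (odd-position entries, even-position entries), positions counted from 1. -/
def altSplit {α : Type*} : List α → List α × List α
  | [] => ([], [])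
  | a :: l => (a :: (altSplit l).2, (altSplit l).1)

/-- The weakly increasing list of indices of a monomial (viewed as a multiset of variable indices). -/
def mSort (m : Multiset ℕ) : List ℕ := m.sort (· ≤ ·)

/-- The sorting operator: merge the indices of `u` and `v` in weakly increasing order and
give the odd positions to the first component, the even positions to the second. -/
def sortPair (u v : Multiset ℕ) : Multiset ℕ × Multiset ℕ :=
  (↑(altSplit (mSort (u + v))).1, ↑(altSplit (mSort (u + v))).2)

/-- A pair of monomials is sorted if the sorting operator fixes it (up to swapping). -/
def SortedPair (u v : Multiset ℕ) : Prop :=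
  sortPair u v = (u, v) ∨ sortPair u v = (v, u)

/-- A monomial is `t`-spread if consecutive indices (in weakly increasing order) differ by ≥ t. -/
def TSpread (t : ℕ) (m : Multiset ℕ) : Prop :=
  (mSort m).Chain' (fun a b => a + t ≤ b)

/-- `v` is componentwise dominated by `u`. -/
def Dominates (v u : Multiset ℕ) : Prop :=
  List.Forall₂ (· ≤ ·) (mSort v) (mSort u)

/-- The minimal generators of the t-spread principal Borel ideal `B_t(u)`:
t-spread monomials of the same degree componentwise dominated by `u`. -/
def BtGens (t : ℕ) (u : Multiset ℕ) : Set (Multiset ℕ) :=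
  {v | Multiset.card v = Multiset.card u ∧ TSpread t v ∧ Dominates v u}

/-- The sorted graph of `B_t(u)`: vertices the minimal generators, edges the sorted pairs. -/
def sortedGraph (t : ℕ) (u : Multiset ℕ) : SimpleGraph ↥(BtGens t u) :=
  SimpleGraph.fromRel (fun v w => SortedPair v.1 w.1)

/-- The graph has an induced cycle of length `n ≥ 4`. -/
def HasInducedCycle {V : Type*} (G : SimpleGraph V) : Prop :=
  ∃ n : ℕ, 4 ≤ n ∧ ∃ f : ZMod n → V, Function.Injective f ∧
    ∀ i j : ZMod n, G.Adj (f i) (f j) ↔ (j = i + 1 ∨ i = j + 1)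

section Aux

lemma coe_mSort (m : Multiset ℕ) : (↑(mSort m) : Multiset ℕ) = m :=
  Multiset.sort_eq _ _

lemma mSort_sorted (m : Multiset ℕ) : (mSort m).Pairwise (· ≤ ·) :=
  Multiset.pairwise_sort _ _

lemma mem_mSort {x : ℕ} {m : Multiset ℕ} : x ∈ mSort m ↔ x ∈ m := by
  unfold mSort; exact Multiset.mem_sort _

lemma mSort_eq_of {m : Multiset ℕ} {L : List ℕ} (hL : L.Pairwise (· ≤ ·))
    (hc : (↑L : Multiset ℕ) = m) : mSort m = L := by
  apply List.Perm.eq_of_pairwise' (mSort_sorted m) hL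
  rw [← Multiset.coe_eq_coe, coe_mSort, hc]

lemma mSort_map_mono {f : ℕ → ℕ} (hf : Monotone f) (m : Multiset ℕ) :
    mSort (m.map f) = (mSort m).map f := by
  apply mSort_eq_of
  · exact List.Pairwise.map f (fun a b h => hf h) (mSort_sorted m)
  · rw [← Multiset.map_coe, coe_mSort]

lemma mSort_cons_le {a : ℕ} {m : Multiset ℕ} (h : ∀ x ∈ m, a ≤ x) :
    mSort (a ::ₘ m) = a :: mSort m := by
  apply mSort_eq_of
  · rw [List.pairwise_cons]
    exact ⟨fun b hb => h b (mem_mSort.mp hb), mSort_sorted m⟩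
  · rw [← Multiset.cons_coe, coe_mSort]

lemma altSplit_cons {α : Type*} (a : α) (l : List α) :
    altSplit (a :: l) = (a :: (altSplit l).2, (altSplit l).1) := rfl

lemma altSplit_map {α β : Type*} (f : α → β) :
    ∀ L : List α, altSplit (L.map f) = ((altSplit L).1.map f, (altSplit L).2.map f)
  | [] => rfl
  | a :: l => by
      simp [altSplit_cons, altSplit_map f l]

lemma altSplit_mem {α : Type*} :
    ∀ (L : List α) (x : α), (x ∈ (altSplit L).1 → x ∈ L) ∧ (x ∈ (altSplit L).2 → x ∈ L)
  | [], x => by simp [altSplit]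
  | a :: l, x => by
      simp only [altSplit_cons, List.mem_cons]
      constructor
      · rintro (h | h)
        · exact Or.inl h
        · exact Or.inr ((altSplit_mem l x).2 h)
      · intro h
        exact Or.inr ((altSplit_mem l x).1 h)

lemma map_sub_cancel {t : ℕ} {m : Multiset ℕ} (hm : ∀ x ∈ m, t ≤ x) :
    (m.map (· - t)).map (· + t) = m := by
  rw [Multiset.map_map]
  rw [show m = m.map id from (Multiset.map_id m).symm]
  rw [Multiset.map_map]
  exact Multiset.map_congr rfl (fun x hx => tsub_add_cancel_of_le (hm x hx))

lemma map_sub_inj {t : ℕ} {m n : Multiset ℕ} (hm : ∀ x ∈ m, t ≤ x) (hn : ∀ x ∈ n, t ≤ x)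
    (h : m.map (· - t) = n.map (· - t)) : m = n := by
  rw [← map_sub_cancel hm, h, map_sub_cancel hn]

lemma tspread_rel {t : ℕ} {m : Multiset ℕ} (hs : TSpread t m) {a b : ℕ}
    (ha : a ∈ m) (hb : b ∈ m) (hab : a < b) : a + t ≤ b := by
  haveI : IsTrans ℕ (fun a b => a + t ≤ b) :=
    ⟨fun a b c h1 h2 => le_trans h1 (le_trans (Nat.le_add_right b t) h2)⟩
  have hp : (mSort m).Pairwise (fun a b => a + t ≤ b) := List.isChain_iff_pairwise.mp hs
  rw [← mem_mSort (m := m)] at ha hb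
  unfold mSort at ha hb hp
  obtain ⟨i, hi⟩ := List.mem_iff_get.mp ha
  obtain ⟨j, hj⟩ := List.mem_iff_get.mp hb
  rcases lt_trichotomy i j with h | h | h
  · rw [← hi, ← hj]; exact List.pairwise_iff_get.mp hp i j h
  · exact absurd (hi.symm.trans (h ▸ hj)) (ne_of_lt hab)
  · have h2 := List.pairwise_iff_get.mp (mSort_sorted m) j i h
    unfold mSort at h2
    rw [hi, hj] at h2
    omega

lemma tspread_not_dup {t : ℕ} {m : Multiset ℕ} (hs : TSpread t m) (ht : 1 ≤ t)
    {a : ℕ} (ha : a ∈ m) : a ∉ m.erase a := by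
  intro h
  haveI : IsTrans ℕ (fun a b => a + t ≤ b) :=
    ⟨fun a b c h1 h2 => le_trans h1 (le_trans (Nat.le_add_right b t) h2)⟩
  have hp : (mSort m).Pairwise (fun a b => a + t ≤ b) := List.isChain_iff_pairwise.mp hs
  have hc : 2 ≤ List.count a (mSort m) := by
    rw [← Multiset.coe_count, coe_mSort]
    have := Multiset.count_pos.mpr h
    rw [Multiset.count_erase_self] at this
    omega
  have hd := List.duplicate_iff_sublist.mp (List.duplicate_iff_two_le_count.mpr hc)
  have := hp.sublist hd
  simp at this
  omega

lemma tspread_struct {t : ℕ} {m : Multiset ℕ} (ht : 1 ≤ t) (hs : TSpread t (1 ::ₘ m)) :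
    (∀ x ∈ m, 1 + t ≤ x) ∨
      (t = 1 ∧ ∃ r, m = 0 ::ₘ r ∧ ∀ x ∈ r, 1 + t ≤ x) := by
  have h1 : (1 : ℕ) ∉ m := by
    have := tspread_not_dup hs ht (a := 1) (Multiset.mem_cons_self 1 m)
    rwa [Multiset.erase_cons_head] at this
  by_cases h0 : (0 : ℕ) ∈ m
  · right
    have ht1 : t = 1 := by
      have := tspread_rel hs (a := 0) (b := 1)
        (Multiset.mem_cons_of_mem h0) (Multiset.mem_cons_self 1 m) (by omega)
      omega
    refine ⟨ht1, m.erase 0, (Multiset.cons_erase h0).symm, fun x hx => ?_⟩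
    have hxm : x ∈ m := Multiset.mem_of_mem_erase hx
    have hx0 : x ≠ 0 := by
      intro h
      subst h
      have hd := tspread_not_dup hs ht (a := 0) (Multiset.mem_cons_of_mem h0)
      rw [Multiset.erase_cons_tail] at hd
      · exact hd (Multiset.mem_cons_of_mem hx)
      · simp
    have hx1 : x ≠ 1 := fun h => h1 (h ▸ hxm)
    exact tspread_rel hs (Multiset.mem_cons_self 1 m)
      (Multiset.mem_cons_of_mem hxm) (by omega)
  · left
    intro x hx
    have hx1 : x ≠ 1 := fun h => h1 (h ▸ hx)
    have hx0 : x ≠ 0 := fun h => h0 (h ▸ hx)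
    exact tspread_rel hs (Multiset.mem_cons_self 1 m)
      (Multiset.mem_cons_of_mem hx) (by omega)

lemma sortedPair_comm (u v : Multiset ℕ) : SortedPair u v ↔ SortedPair v u := by
  unfold SortedPair sortPair
  rw [add_comm v u]
  tauto

lemma sub_mono (t : ℕ) : Monotone (fun x : ℕ => x - t) :=
  fun a b h => Nat.sub_le_sub_right h t

end Aux

section Cases

/-- case: no zeros in either -/
lemma case_nz {t : ℕ} (ht : 1 ≤ t) {m₁ m₂ : Multiset ℕ}
    (h₁ : ∀ x ∈ m₁, 1 + t ≤ x) (h₂ : ∀ x ∈ m₂, 1 + t ≤ x) :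
    SortedPair (1 ::ₘ m₁) (1 ::ₘ m₂) ↔ SortedPair (m₁.map (· - t)) (m₂.map (· - t)) := by
  set S := mSort (m₁ + m₂) with hS
  have hmemS : ∀ x ∈ S, 1 + t ≤ x := by
    intro x hx
    rw [hS] at hx
    rw [mem_mSort] at hx
    rcases Multiset.mem_add.mp hx with h | h
    · exact h₁ x h
    · exact h₂ x h
  have hA : ∀ x ∈ (altSplit S).1, t ≤ x := fun x hx => by
    have := hmemS x ((altSplit_mem S x).1 hx); omega
  have hB : ∀ x ∈ (altSplit S).2, t ≤ x := fun x hx => by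
    have := hmemS x ((altSplit_mem S x).2 hx); omega
  have hLs : mSort (1 ::ₘ m₁ + (1 ::ₘ m₂)) = 1 :: 1 :: S := by
    have e : (1 ::ₘ m₁) + (1 ::ₘ m₂) = 1 ::ₘ (1 ::ₘ (m₁ + m₂)) := by
      rw [Multiset.cons_add, Multiset.add_cons]
    rw [e, mSort_cons_le, mSort_cons_le]
    · intro x hx
      rcases Multiset.mem_add.mp hx with h | h
      · have := h₁ x h; omega
      · have := h₂ x h; omega
    · intro x hx
      rcases Multiset.mem_cons.mp hx with h | h
      · omega
      · rcases Multiset.mem_add.mp h with h | h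
        · have := h₁ x h; omega
        · have := h₂ x h; omega
  have hRs : mSort (m₁.map (· - t) + m₂.map (· - t)) = S.map (· - t) := by
    rw [← Multiset.map_add, mSort_map_mono (sub_mono t)]
  unfold SortedPair sortPair
  rw [hLs, hRs]
  simp only [altSplit_cons, altSplit_map, Prod.mk.injEq, ← Multiset.cons_coe, Multiset.cons_inj_right,
    ← Multiset.map_coe]
  constructor
  · rintro (⟨hu, hv⟩ | ⟨hu, hv⟩)
    · exact Or.inl ⟨by rw [hu], by rw [hv]⟩
    · exact Or.inr ⟨by rw [hu], by rw [hv]⟩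
  · rintro (⟨hu, hv⟩ | ⟨hu, hv⟩)
    · exact Or.inl ⟨map_sub_inj hA (fun x hx => by have := h₁ x hx; omega) hu,
        map_sub_inj hB (fun x hx => by have := h₂ x hx; omega) hv⟩
    · exact Or.inr ⟨map_sub_inj hA (fun x hx => by have := h₂ x hx; omega) hu,
        map_sub_inj hB (fun x hx => by have := h₁ x hx; omega) hv⟩

end Cases

section ZeroCases

lemma zero_sub_one : (fun x : ℕ => x - 1) 0 = 0 := rfl

lemma cons_110 (M : Multiset ℕ) :
    (1:ℕ) ::ₘ 1 ::ₘ 0 ::ₘ M = 0 ::ₘ 1 ::ₘ 1 ::ₘ M := by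
  calc (1:ℕ) ::ₘ 1 ::ₘ 0 ::ₘ M = 1 ::ₘ 0 ::ₘ 1 ::ₘ M := by rw [Multiset.cons_swap 1 0 M]
    _ = 0 ::ₘ 1 ::ₘ 1 ::ₘ M := Multiset.cons_swap 1 0 _

lemma cons_1010 (M : Multiset ℕ) :
    (1:ℕ) ::ₘ 0 ::ₘ 1 ::ₘ 0 ::ₘ M = 0 ::ₘ 0 ::ₘ 1 ::ₘ 1 ::ₘ M := by
  calc (1:ℕ) ::ₘ 0 ::ₘ 1 ::ₘ 0 ::ₘ M = 0 ::ₘ 1 ::ₘ 1 ::ₘ 0 ::ₘ M :=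
      Multiset.cons_swap 1 0 _
    _ = 0 ::ₘ 1 ::ₘ 0 ::ₘ 1 ::ₘ M := by rw [Multiset.cons_swap 1 0 M]
    _ = 0 ::ₘ 0 ::ₘ 1 ::ₘ 1 ::ₘ M := by rw [Multiset.cons_swap 1 0 (1 ::ₘ M)]

lemma case_znz {r₁ m₂ : Multiset ℕ} (h₁ : ∀ x ∈ r₁, 2 ≤ x) (h₂ : ∀ x ∈ m₂, 2 ≤ x) :
    SortedPair (1 ::ₘ (0 ::ₘ r₁)) (1 ::ₘ m₂) ↔
      SortedPair ((0 ::ₘ r₁).map (· - 1)) (m₂.map (· - 1)) := by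
  set S := mSort (r₁ + m₂) with hS
  have hmemS : ∀ x ∈ S, 2 ≤ x := by
    intro x hx
    rw [hS, mem_mSort] at hx
    rcases Multiset.mem_add.mp hx with h | h
    · exact h₁ x h
    · exact h₂ x h
  have hA : ∀ x ∈ (altSplit S).1, 1 ≤ x := fun x hx => by
    have := hmemS x ((altSplit_mem S x).1 hx); omega
  have hB : ∀ x ∈ (altSplit S).2, 1 ≤ x := fun x hx => by
    have := hmemS x ((altSplit_mem S x).2 hx); omega
  have hr₁ : ∀ x ∈ r₁, (1:ℕ) ≤ x := fun x hx => by have := h₁ x hx; omega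
  have hm₂ : ∀ x ∈ m₂, (1:ℕ) ≤ x := fun x hx => by have := h₂ x hx; omega
  have hLs : mSort (1 ::ₘ (0 ::ₘ r₁) + (1 ::ₘ m₂)) = 0 :: 1 :: 1 :: S := by
    have e : 1 ::ₘ (0 ::ₘ r₁) + (1 ::ₘ m₂) = 0 ::ₘ (1 ::ₘ (1 ::ₘ (r₁ + m₂))) := by
      simp only [Multiset.cons_add, Multiset.add_cons]
      exact cons_110 _
    rw [e, mSort_cons_le (fun x _ => Nat.zero_le x), mSort_cons_le, mSort_cons_le]
    · intro x hx
      rcases Multiset.mem_add.mp hx with h | h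
      · have := h₁ x h; omega
      · have := h₂ x h; omega
    · intro x hx
      rcases Multiset.mem_cons.mp hx with h | h
      · omega
      · rcases Multiset.mem_add.mp h with h | h
        · have := h₁ x h; omega
        · have := h₂ x h; omega
  have hRs : mSort ((0 ::ₘ r₁).map (· - 1) + m₂.map (· - 1)) = 0 :: S.map (· - 1) := by
    rw [Multiset.map_cons, Nat.zero_sub, Multiset.cons_add, ← Multiset.map_add,
      mSort_cons_le (fun x _ => Nat.zero_le x), mSort_map_mono (sub_mono 1)]
  have hz₂ : (0:ℕ) ∉ (1 ::ₘ m₂) := by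
    intro h
    rcases Multiset.mem_cons.mp h with h | h
    · omega
    · have := h₂ 0 h; omega
  have hz₂' : (0:ℕ) ∉ m₂.map (· - 1) := by
    intro h
    obtain ⟨x, hx, hfx⟩ := Multiset.mem_map.mp h
    have := h₂ x hx; omega
  unfold SortedPair sortPair
  rw [hLs, hRs]
  simp only [altSplit_cons, altSplit_map, Prod.mk.injEq, ← Multiset.cons_coe, Multiset.cons_inj_right,
    ← Multiset.map_coe, Multiset.map_cons, Nat.zero_sub, altSplit_map]
  constructor
  · rintro (⟨hu, hv⟩ | ⟨hu, hv⟩)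
    · rw [Multiset.cons_swap, Multiset.cons_inj_right, Multiset.cons_inj_right] at hu
      exact Or.inl ⟨by rw [hu], by rw [hv]⟩
    · exact absurd (hu ▸ Multiset.mem_cons_self 0 _) hz₂
  · rintro (⟨hu, hv⟩ | ⟨hu, hv⟩)
    · left
      constructor
      · rw [Multiset.cons_swap, Multiset.cons_inj_right, Multiset.cons_inj_right]
        exact map_sub_inj (t := 1) hB hr₁ hu
      · exact map_sub_inj (t := 1) hA hm₂ hv
    · exact absurd (hu ▸ Multiset.mem_cons_self 0 _) hz₂'

lemma case_zz {r₁ r₂ : Multiset ℕ} (h₁ : ∀ x ∈ r₁, 2 ≤ x) (h₂ : ∀ x ∈ r₂, 2 ≤ x) :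
    SortedPair (1 ::ₘ (0 ::ₘ r₁)) (1 ::ₘ (0 ::ₘ r₂)) ↔
      SortedPair ((0 ::ₘ r₁).map (· - 1)) ((0 ::ₘ r₂).map (· - 1)) := by
  set S := mSort (r₁ + r₂) with hS
  have hmemS : ∀ x ∈ S, 2 ≤ x := by
    intro x hx
    rw [hS, mem_mSort] at hx
    rcases Multiset.mem_add.mp hx with h | h
    · exact h₁ x h
    · exact h₂ x h
  have hA : ∀ x ∈ (altSplit S).1, 1 ≤ x := fun x hx => by
    have := hmemS x ((altSplit_mem S x).1 hx); omega
  have hB : ∀ x ∈ (altSplit S).2, 1 ≤ x := fun x hx => by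
    have := hmemS x ((altSplit_mem S x).2 hx); omega
  have hr₁ : ∀ x ∈ r₁, (1:ℕ) ≤ x := fun x hx => by have := h₁ x hx; omega
  have hr₂ : ∀ x ∈ r₂, (1:ℕ) ≤ x := fun x hx => by have := h₂ x hx; omega
  have hLs : mSort (1 ::ₘ (0 ::ₘ r₁) + (1 ::ₘ (0 ::ₘ r₂))) = 0 :: 0 :: 1 :: 1 :: S := by
    have e : 1 ::ₘ (0 ::ₘ r₁) + (1 ::ₘ (0 ::ₘ r₂)) =
        0 ::ₘ (0 ::ₘ (1 ::ₘ (1 ::ₘ (r₁ + r₂)))) := by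
      simp only [Multiset.cons_add, Multiset.add_cons]
      exact cons_1010 _
    have hs1 : ∀ x ∈ (r₁ + r₂ : Multiset ℕ), 1 ≤ x := by
      intro x hx
      rcases Multiset.mem_add.mp hx with h | h
      · exact hr₁ x h
      · exact hr₂ x h
    rw [e, mSort_cons_le (fun x _ => Nat.zero_le x), mSort_cons_le (fun x _ => Nat.zero_le x),
      mSort_cons_le, mSort_cons_le hs1]
    intro x hx
    rcases Multiset.mem_cons.mp hx with h | h
    · omega
    · exact hs1 x h
  have hRs : mSort ((0 ::ₘ r₁).map (· - 1) + (0 ::ₘ r₂).map (· - 1)) =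
      0 :: 0 :: S.map (· - 1) := by
    rw [Multiset.map_cons, Multiset.map_cons, Nat.zero_sub, Multiset.cons_add,
      Multiset.add_cons, ← Multiset.map_add, mSort_cons_le (fun x _ => Nat.zero_le x),
      mSort_cons_le (fun x _ => Nat.zero_le x), mSort_map_mono (sub_mono 1)]
  unfold SortedPair sortPair
  rw [hLs, hRs]
  simp only [altSplit_cons, altSplit_map, Prod.mk.injEq, ← Multiset.cons_coe, Multiset.cons_inj_right,
    ← Multiset.map_coe, Multiset.map_cons, Nat.zero_sub, altSplit_map]
  have swap01 : ∀ (s : Multiset ℕ) (r : Multiset ℕ),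
      (0 ::ₘ 1 ::ₘ s = 1 ::ₘ 0 ::ₘ r) ↔ s = r := by
    intro s r
    rw [Multiset.cons_swap, Multiset.cons_inj_right, Multiset.cons_inj_right]
  rw [swap01, swap01, swap01, swap01]
  constructor
  · rintro (⟨hu, hv⟩ | ⟨hu, hv⟩)
    · exact Or.inl ⟨by rw [hu], by rw [hv]⟩
    · exact Or.inr ⟨by rw [hu], by rw [hv]⟩
  · rintro (⟨hu, hv⟩ | ⟨hu, hv⟩)
    · exact Or.inl ⟨map_sub_inj (t := 1) hA hr₁ hu, map_sub_inj (t := 1) hB hr₂ hv⟩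
    · exact Or.inr ⟨map_sub_inj (t := 1) hA hr₂ hu, map_sub_inj (t := 1) hB hr₁ hv⟩

end ZeroCases

/-- sortedness of pairs of t-spread monomials starting with x₁ is invariant
under deleting x₁ and shifting indices down by t. -/
theorem sorted_shift_invariant (t d : ℕ) (ht : 1 ≤ t) (l₁ l₂ : List ℕ)
    (h₁ : l₁.length = d - 1) (h₂ : l₂.length = d - 1)
    (hs₁ : TSpread t ↑(1 :: l₁)) (hs₂ : TSpread t ↑(1 :: l₂)) :
    SortedPair ↑(1 :: l₁) ↑(1 :: l₂) ↔
      SortedPair ↑(l₁.map (· - t)) ↑(l₂.map (· - t)) := by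
  clear h₁ h₂
  simp only [← Multiset.cons_coe] at hs₁ hs₂ ⊢
  simp only [← Multiset.map_coe]
  generalize (↑l₁ : Multiset ℕ) = m₁ at hs₁ ⊢
  generalize (↑l₂ : Multiset ℕ) = m₂ at hs₂ ⊢
  rcases tspread_struct ht hs₁ with hc₁ | ⟨ht1, r₁, hr₁, hc₁⟩ <;>
    rcases tspread_struct ht hs₂ with hc₂ | ⟨ht2, r₂, hr₂, hc₂⟩
  · exact case_nz ht hc₁ hc₂
  · subst ht2
    subst hr₂
    rw [sortedPair_comm (1 ::ₘ m₁), sortedPair_comm (m₁.map _)]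
    exact case_znz (fun x hx => by have := hc₂ x hx; omega)
      (fun x hx => by have := hc₁ x hx; omega)
  · subst ht1
    subst hr₁
    exact case_znz (fun x hx => by have := hc₁ x hx; omega)
      (fun x hx => by have := hc₂ x hx; omega)
  · subst ht1
    subst hr₁
    subst hr₂
    exact case_zz (fun x hx => by have := hc₁ x hx; omega)
      (fun x hx => by have := hc₂ x hx; omega)
end

section
/- Let t ≥ 1 and d ≥ 3, and let v_p for 0 ≤ p ≤ d and the B-family w_q = (∏_{j=1}^{q} x_{(j−1)t+1})(∏_{j=q+1}^{d−1} x_{(j−1)t+2})·x_{(d−1)t+3} for 1 ≤ q ≤ d−1 be as below. Then for any 1 ≤ a < b ≤ d−1, the pair (w_a, w_b) is sorted. -/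
lemma altSplit_cons_cons {α : Type*} (x y : α) (l : List α) :
    altSplit (x :: y :: l) = (x :: (altSplit l).1, y :: (altSplit l).2) := by
  rfl

lemma altSplit_flatMap {α : Type*} (f g : ℕ → α) (l : List ℕ) :
    altSplit (l.flatMap (fun j => [f j, g j])) = (l.map f, l.map g) := by
  induction l with
  | nil => rfl
  | cons x l ih =>
    rw [List.flatMap_cons, List.cons_append, List.cons_append, List.nil_append,
      altSplit_cons_cons, ih]
    simp

lemma coe_flatMap (f g : ℕ → ℕ) (l : List ℕ) :
    (↑(l.flatMap (fun j => [f j, g j])) : Multiset ℕ) = ↑(l.map f) + ↑(l.map g) := by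
  induction l with
  | nil => rfl
  | cons x l ih =>
    rw [List.flatMap_cons, List.cons_append, List.cons_append, List.nil_append,
      List.map_cons, List.map_cons, ← Multiset.cons_coe, ← Multiset.cons_coe,
      ← Multiset.cons_coe, ← Multiset.cons_coe, ih]
    simp only [← Multiset.singleton_add]
    abel

lemma mSort_coe (l : List ℕ) (h : l.Pairwise (· ≤ ·)) :
    (↑l : Multiset ℕ).sort (· ≤ ·) = l := by
  apply List.Perm.eq_of_pairwise' (Multiset.pairwise_sort _ _) h
  rw [← Multiset.coe_eq_coe, Multiset.sort_eq]

lemma chain'_flatMap (f g : ℕ → ℕ) (l : List ℕ)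
    (hfg : ∀ j ∈ l, f j ≤ g j)
    (hl : l.Chain' (fun i j => g i ≤ f j)) :
    (l.flatMap (fun j => [f j, g j])).Chain' (· ≤ ·) := by
  induction l with
  | nil => simp [List.Chain']
  | cons x l ih =>
    cases l with
    | nil => simp [List.Chain', hfg x (by simp)]
    | cons y l =>
      unfold List.Chain' at hl
      rw [List.isChain_cons_cons] at hl
      have := ih (fun j hj => hfg j (List.mem_cons_of_mem _ hj)) hl.2
      simp only [List.flatMap_cons, List.cons_append, List.nil_append] at this ⊢
      unfold List.Chain'
      rw [List.isChain_cons_cons, List.isChain_cons_cons]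
      exact ⟨hfg x (by simp), hl.1, this⟩

/-- any two distinct members of the B-family
w_q = (∏_{j=1}^{q} x_{(j−1)t+1})(∏_{j=q+1}^{d−1} x_{(j−1)t+2})·x_{(d−1)t+3}
(1 ≤ q ≤ d−1) form a sorted pair. -/
theorem B_family_sorted (t d : ℕ) (ht : 1 ≤ t) (hd : 3 ≤ d) (a b : ℕ)
    (ha : 1 ≤ a) (hab : a < b) (hb : b ≤ d - 1) :
    SortedPair
      (↑((List.range (d - 1)).map (fun j => if j < a then j * t + 1 else j * t + 2)) +
        {(d - 1) * t + 3})
      (↑((List.range (d - 1)).map (fun j => if j < b then j * t + 1 else j * t + 2)) +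
        {(d - 1) * t + 3}) := by
  set e := d - 1 with he
  have hbe : b ≤ e := hb
  set F : ℕ → ℕ := fun j => if j < b then j*t+1 else if j < e then j*t+2 else e*t+3 with hF
  set G : ℕ → ℕ := fun j => if j < a then j*t+1 else if j < e then j*t+2 else e*t+3 with hG
  set M := (List.range (e+1)).flatMap (fun j => [F j, G j]) with hM
  have hmapF : (List.range (e+1)).map F
      = ((List.range e).map fun j => if j < b then j*t+1 else j*t+2) ++ [e*t+3] := by
    rw [List.range_succ, List.map_append, List.map_singleton]
    congr 1
    · refine List.map_congr_left fun j hj => ?_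
      rw [List.mem_range] at hj
      by_cases h : j < b <;> simp [hF, h, hj]
    · simp [hF, show ¬ e < b by omega]
  have hmapG : (List.range (e+1)).map G
      = ((List.range e).map fun j => if j < a then j*t+1 else j*t+2) ++ [e*t+3] := by
    rw [List.range_succ, List.map_append, List.map_singleton]
    congr 1
    · refine List.map_congr_left fun j hj => ?_
      rw [List.mem_range] at hj
      by_cases h : j < a <;> simp [hG, h, hj]
    · simp [hG, show ¬ e < a by omega]
  have hsorted : M.Pairwise (· ≤ ·) := by
    rw [← List.isChain_iff_pairwise]
    apply chain'_flatMap
    · intro j hj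
      rw [List.mem_range] at hj
      have h1 : j * t ≤ e * t := Nat.mul_le_mul_right t (by omega)
      simp only [hF, hG]
      split_ifs <;> linarith
    · unfold List.Chain'
      rw [List.isChain_range_succ]
      intro m hm
      have h1 : (m+1) * t = m*t + t := by ring
      have h2 : (m+1) * t ≤ e * t := Nat.mul_le_mul_right t (by omega)
      simp only [hF, hG]
      split_ifs <;> linarith
  have hsum : ((↑((List.range e).map (fun j => if j < a then j * t + 1 else j * t + 2)) +
        ({e * t + 3} : Multiset ℕ)) +
      (↑((List.range e).map (fun j => if j < b then j * t + 1 else j * t + 2)) +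
        {e * t + 3})) = (↑M : Multiset ℕ) := by
    rw [hM, coe_flatMap, hmapF, hmapG, ← Multiset.coe_add, ← Multiset.coe_add,
      Multiset.coe_singleton]
    abel
  right
  show sortPair _ _ = _
  unfold sortPair mSort
  rw [hsum, mSort_coe _ hsorted, hM, altSplit_flatMap, hmapF, hmapG]
  simp only [← Multiset.coe_add, Multiset.coe_singleton]
end
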